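/- arXiv:1709.10342 — 2 statements merged into one kernel-verified Lean document; each statement's English description precedes it below -/
import Mathlib

section
/- Let 𝔫 be the 10-dimensional nilpotent Lie algebra with basis X₁,X₂,X₃, Y₁,Y₂,Y₃, Z₁,Z₂,Z₃,Z₄ and nonzero basis brackets (up to antisymmetry) [X₁,Y₁]=Y₂, [X₁,Y₂]=Y₃, [X₂,Y₁]=Y₃, [X₁,Z₁]=Z₂, [X₂,Z₁]=Z₃, [X₁,Z₂]=Z₄, [X₂,Z₃]=Z₄, [X₁,X₂]=X₃. Then: (a) 𝔫 is 3-step nilpotent and its center is spanned by X₃, Y₃, Z₄; (b) the diagonal maps Diag(0,0,0,1,1,1,0,0,0,0) and Diag(0,0,0,0,0,0,1,1,1,1) (with respect to the ordered basis X₁,X₂,X₃,Y₁,Y₂,Y₃,Z₁,Z₂,Z₃,Z₄) are derivations of 𝔫 of positive trace; (c) for every derivation D′ of 𝔫 which is diagonalizable over ℝ, the restriction of D′ to the center of 𝔫 is singular (i.e. has 0 as an eigenvalue). -/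
open scoped BigOperators

namespace RNPaper

/-- Structure constants of a skew-symmetric algebra on `ℝⁿ`:
an element of `V = Λ²(ℝⁿ)*⊗ℝⁿ` written in the basis `μ_{ijk}`. -/
abbrev SC (n : ℕ) := Fin n → Fin n → Fin n → ℝ

variable {n : ℕ}

def IsAntisym (c : SC n) : Prop := ∀ i j k, c j i k = - c i j k

/-- The bilinear map `ℝⁿ×ℝⁿ→ℝⁿ` associated to the structure constants `c`. -/
def br (c : SC n) (x y : Fin n → ℝ) : Fin n → ℝ :=
  fun k => ∑ i, ∑ j, x i * y j * c i j k

def IsJacobi (c : SC n) : Prop :=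
  ∀ x y z : Fin n → ℝ,
    br c (br c x y) z + br c (br c y z) x + br c (br c z x) y = 0

def nest (c : SC n) (v : ℕ → (Fin n → ℝ)) : ℕ → (Fin n → ℝ)
  | 0 => v 0
  | k + 1 => br c (v (k + 1)) (nest c v k)

def IsNilpotentBracket (c : SC n) : Prop :=
  ∃ N : ℕ, ∀ v : ℕ → (Fin n → ℝ), nest c v N = 0

/-- `c` is the Lie bracket of a nilpotent Lie algebra. -/
def IsNilpotentLie (c : SC n) : Prop := IsAntisym c ∧ IsJacobi c ∧ IsNilpotentBracket c

/-- `D` is a derivation of the algebra with structure constants `c`. -/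
def IsDeriv (c : SC n) (D : Matrix (Fin n) (Fin n) ℝ) : Prop :=
  ∀ x y : Fin n → ℝ,
    D.mulVec (br c x y) = br c (D.mulVec x) y + br c x (D.mulVec y)

/-- The inner product on `V` making the basis `μ_{ijk}` (`i<j`) orthonormal. -/
def innerV (c d : SC n) : ℝ := ∑ i, ∑ j, ∑ k, if i < j then c i j k * d i j k else 0

/-- The inner product `⟨A,B⟩ = tr(ABᵀ)` on matrices. -/
def innerM (A B : Matrix (Fin n) (Fin n) ℝ) : ℝ := ∑ a, ∑ b, A a b * B a b

/-- The `gl(n,ℝ)`-action `E·μ = Eμ(·,·) − μ(E·,·) − μ(·,E·)`. -/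
def lieAct (E : Matrix (Fin n) (Fin n) ℝ) (c : SC n) : SC n :=
  fun i j k => (∑ l, E k l * c i j l) - (∑ p, E p i * c p j k) - (∑ p, E p j * c i p k)

/-- The `GL(n,ℝ)`-action `(g·μ)(v,w) = g μ(g⁻¹v, g⁻¹w)` in structure constants. -/
def glAct (g : GL (Fin n) ℝ) (c : SC n) : SC n :=
  fun i j k => ∑ p, ∑ q, ∑ l,
    ((g⁻¹ : GL (Fin n) ℝ) : Matrix (Fin n) (Fin n) ℝ) p i
      * ((g⁻¹ : GL (Fin n) ℝ) : Matrix (Fin n) (Fin n) ℝ) q j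
      * ((g : Matrix (Fin n) (Fin n) ℝ) k l) * c p q l

/-- `m` is the moment map: `⟨m(μ),E⟩ = |μ|⁻²⟨E·μ,μ⟩` for all symmetric `E` and `μ ≠ 0`,
with `m(μ)` a symmetric matrix. -/
def IsMomentMap (m : SC n → Matrix (Fin n) (Fin n) ℝ) : Prop :=
  ∀ c : SC n, c ≠ 0 →
    (m c).IsSymm ∧
      ∀ E : Matrix (Fin n) (Fin n) ℝ, E.IsSymm →
        innerM (m c) E = (innerV c c)⁻¹ * innerV (lieAct E c) c

/-- The centralizer of `D` in `GL(n,ℝ)`. -/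
def centralizerSet (D : Matrix (Fin n) (Fin n) ℝ) : Set (GL (Fin n) ℝ) :=
  {g | (g : Matrix (Fin n) (Fin n) ℝ) * D = D * (g : Matrix (Fin n) (Fin n) ℝ)}

lemma one_mem_centralizerSet (D : Matrix (Fin n) (Fin n) ℝ) :
    (1 : GL (Fin n) ℝ) ∈ centralizerSet D := by
  simp [centralizerSet]

/-- `G_D`: the identity component of the centralizer of `D` in `GL(n,ℝ)`. -/
def GD (D : Matrix (Fin n) (Fin n) ℝ) : Set (GL (Fin n) ℝ) :=
  Subtype.val '' connectedComponent (⟨1, one_mem_centralizerSet D⟩ : centralizerSet D)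

/-- The orbit of `c` under a set `S ⊆ GL(n,ℝ)`. -/
def orbitOf (S : Set (GL (Fin n) ℝ)) (c : SC n) : Set (SC n) :=
  (fun g => glAct g c) '' S

noncomputable def diagAct (d : Fin n → ℝ) (c : SC n) : SC n :=
  fun i j k => (d k / (d i * d j)) * c i j k

/-- The orbit `T·μ` of the subgroup of diagonal matrices with positive entries. -/
def Torbit (c : SC n) : Set (SC n) :=
  {x | ∃ d : Fin n → ℝ, (∀ i, 0 < d i) ∧ x = diagAct d c}

/-- The weight `F_{ij}^k = E_kk − E_ii − E_jj`. -/
def Fwt (i j k : Fin n) : Matrix (Fin n) (Fin n) ℝ :=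
  Matrix.single k k 1 - Matrix.single i i 1 - Matrix.single j j 1

/-- `CH_μ`: the convex hull of the weights of `μ`. -/
def CHmu (c : SC n) : Set (Matrix (Fin n) (Fin n) ℝ) :=
  convexHull ℝ {M | ∃ i j k : Fin n, i < j ∧ c i j k ≠ 0 ∧ M = Fwt i j k}

/-- The diagonal part of a matrix. -/
def diagPart (A : Matrix (Fin n) (Fin n) ℝ) : Matrix (Fin n) (Fin n) ℝ :=
  Matrix.diagonal fun i => A i i

/-- Membership in `𝔱ⁿ_{>0}`, the diagonal matrices with positive diagonal entries. -/
def DiagPos (E : Matrix (Fin n) (Fin n) ℝ) : Prop :=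
  ∃ d : Fin n → ℝ, (∀ i, 0 < d i) ∧ E = Matrix.diagonal d

/-- The basis is nice for the bracket `c`. -/
def IsNice (c : SC n) : Prop :=
  (∀ i j k l, c i j k ≠ 0 → c i j l ≠ 0 → k = l) ∧
  ∀ i j r s k, c i j k ≠ 0 → c r s k ≠ 0 →
    ({i, j} : Finset (Fin n)) = {r, s} ∨
      Disjoint ({i, j} : Finset (Fin n)) ({r, s} : Finset (Fin n))

/-- `A` is diagonalizable over `ℝ`. -/
def IsDiagonalizableR {N : ℕ} (A : Matrix (Fin N) (Fin N) ℝ) : Prop :=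
  ∃ g : GL (Fin N) ℝ, ∃ d : Fin N → ℝ,
    A = (g : Matrix (Fin N) (Fin N) ℝ) * Matrix.diagonal d
      * ((g⁻¹ : GL (Fin N) ℝ) : Matrix (Fin N) (Fin N) ℝ)

/-- `D` extended by zero to `𝔰_D = ℝf ⊕ 𝔫` (index `0` corresponds to `f`). -/
def Dext (D : Matrix (Fin n) (Fin n) ℝ) : Matrix (Fin (n + 1)) (Fin (n + 1)) ℝ :=
  Matrix.of (Fin.cons (fun _ => (0 : ℝ)) (fun k => Fin.cons (0 : ℝ) (fun j => D k j)))

/-- The bracket of `𝔫` extended by zero to `𝔰_D = ℝf ⊕ 𝔫`. -/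
def cext (c : SC n) : SC (n + 1) :=
  Fin.cons (fun _ _ => 0)
    (fun i => Fin.cons (fun _ => 0) (fun j => Fin.cons 0 (fun k => c i j k)))

/-- Structure constants of the solvable extension `𝔰_D = ℝf ⊕ 𝔫`, `[f,X] = D X`. -/
def solvSC (D : Matrix (Fin n) (Fin n) ℝ) (c : SC n) : SC (n + 1) :=
  fun i j k =>
    (if i = 0 then Dext D k j else 0) - (if j = 0 then Dext D k i else 0) + cext c i j k

/-- The matrix of `ad X`. -/
def adM {N : ℕ} (γ : SC N) (X : Fin N → ℝ) : Matrix (Fin N) (Fin N) ℝ :=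
  Matrix.of fun k j => ∑ i, X i * γ i j k

/-- The bilinear form with Gram matrix `P`. -/
def bip {N : ℕ} (P : Matrix (Fin N) (Fin N) ℝ) (x y : Fin N → ℝ) : ℝ :=
  dotProduct x (P.mulVec y)

/-- `⟨Ric X,Y⟩` computed via the orthonormal basis `u`:
`−½Σ⟨[X,uₐ],[Y,uₐ]⟩ + ¼ΣΣ⟨[uₐ,u_b],X⟩⟨[uₐ,u_b],Y⟩ − ½ tr(ad X ∘ ad Y)
 − ½(⟨[H,X],Y⟩+⟨[H,Y],X⟩)`. -/
noncomputable def ricForm {N : ℕ} (γ : SC N) (P : Matrix (Fin N) (Fin N) ℝ)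
    (u : Fin N → (Fin N → ℝ)) (H : Fin N → ℝ) (X Y : Fin N → ℝ) : ℝ :=
  -(1 / 2) * (∑ a, bip P (br γ X (u a)) (br γ Y (u a)))
    + (1 / 4) * (∑ a, ∑ b, bip P (br γ (u a) (u b)) X * bip P (br γ (u a) (u b)) Y)
    - (1 / 2) * Matrix.trace (adM γ X * adM γ Y)
    - (1 / 2) * (bip P (br γ H X) Y + bip P (br γ H Y) X)

/-- `D` is a Ricci negative derivation of `𝔫`: the solvable extension `𝔰_D = ℝf ⊕ 𝔫`
admits an inner product (with Gram matrix `P`) such that `f ⟂ 𝔫`, `D` is symmetric,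
and the Ricci operator is negative definite. -/
def IsRicciNegative (c : SC n) (D : Matrix (Fin n) (Fin n) ℝ) : Prop :=
  ∃ P : Matrix (Fin (n + 1)) (Fin (n + 1)) ℝ, P.PosDef ∧
    (∀ j : Fin n, P 0 j.succ = 0) ∧
    (Dext D).transpose * P = P * Dext D ∧
    ∃ u : Fin (n + 1) → (Fin (n + 1) → ℝ),
      (∀ a b, bip P (u a) (u b) = if a = b then 1 else 0) ∧
      ∃ H : Fin (n + 1) → ℝ,
        (∀ X : Fin (n + 1) → ℝ, bip P H X = Matrix.trace (adM (solvSC D c) X)) ∧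
        ∀ X : Fin (n + 1) → ℝ, X ≠ 0 → ricForm (solvSC D c) P u H X X < 0

/-- The bracket `[e_i,e_j] = v e_k` (and `[e_j,e_i] = −v e_k`) as an element of `V`. -/
def brk {N : ℕ} (i j k : Fin N) (v : ℝ) : SC N :=
  fun p q r =>
    if p = i ∧ q = j ∧ r = k then v else if p = j ∧ q = i ∧ r = k then -v else 0


/-- The center `𝔷(𝔫) = {x : [x,𝔫] = 0}`. -/
def centerSet {N : ℕ} (c : SC N) : Set (Fin N → ℝ) := {x | ∀ y, br c x y = 0}

/-- Proposition 4.3 (ii): basis `X₁,X₂,X₃ = e₀,e₁,e₂`, `Y₁,Y₂,Y₃ = e₃,e₄,e₅`,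
`Z₁,…,Z₄ = e₆,…,e₉`. -/
def c16 : SC 10 :=
  brk 0 3 4 1 + brk 0 4 5 1 + brk 1 3 5 1 +
    brk 0 6 7 1 + brk 1 6 8 1 + brk 0 7 9 1 + brk 1 8 9 1 + brk 0 1 2 1

noncomputable def D16a : Matrix (Fin 10) (Fin 10) ℝ :=
  Matrix.diagonal ![0, 0, 0, 1, 1, 1, 0, 0, 0, 0]

noncomputable def D16b : Matrix (Fin 10) (Fin 10) ℝ :=
  Matrix.diagonal ![0, 0, 0, 0, 0, 0, 1, 1, 1, 1]


/-! ### Auxiliary machinery -/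

lemma br_add' {n : ℕ} (c d : SC n) (x y : Fin n → ℝ) :
    br (c + d) x y = br c x y + br d x y := by
  funext k
  simp [br, Pi.add_apply, mul_add, Finset.sum_add_distrib]

lemma br_brk {N : ℕ} {i j k : Fin N} (h : i ≠ j) (v : ℝ) (x y : Fin N → ℝ) :
    br (brk i j k v) x y = Pi.single k (v * (x i * y j - x j * y i)) := by
  funext r
  have hsplit : ∀ p q : Fin N, brk i j k v p q r =
      (if p = i ∧ q = j ∧ r = k then v else 0) + (if p = j ∧ q = i ∧ r = k then -v else 0) := by
    intro p q
    unfold brk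
    by_cases h1 : p = i ∧ q = j ∧ r = k
    · have h2 : ¬(p = j ∧ q = i ∧ r = k) := by
        rintro ⟨hp, -, -⟩
        exact h (h1.1 ▸ hp)
      simp [h1, h2, h, Ne.symm h]
    · by_cases h2 : p = j ∧ q = i ∧ r = k <;> simp [h1, h2, h, Ne.symm h]
  simp only [br, hsplit, mul_add, Finset.sum_add_distrib, ite_and, mul_ite, mul_zero, mul_neg]
  simp [Finset.sum_ite_eq', Pi.single_apply]
  by_cases hr : r = k <;> simp [hr] <;> ring

/-- Closed form of the bracket of `c16`. -/
def B (x y : Fin 10 → ℝ) : Fin 10 → ℝ := fun k =>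
  if k = 2 then x 0*y 1 - x 1*y 0
  else if k = 4 then x 0*y 3 - x 3*y 0
  else if k = 5 then x 0*y 4 - x 4*y 0 + (x 1*y 3 - x 3*y 1)
  else if k = 7 then x 0*y 6 - x 6*y 0
  else if k = 8 then x 1*y 6 - x 6*y 1
  else if k = 9 then x 0*y 7 - x 7*y 0 + (x 1*y 8 - x 8*y 1)
  else 0

lemma br16 (x y : Fin 10 → ℝ) : br c16 x y = B x y := by
  funext k
  simp only [c16, br_add', br_brk (show (0:Fin 10) ≠ 3 by decide),
    br_brk (show (0:Fin 10) ≠ 4 by decide), br_brk (show (1:Fin 10) ≠ 3 by decide),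
    br_brk (show (0:Fin 10) ≠ 6 by decide), br_brk (show (1:Fin 10) ≠ 6 by decide),
    br_brk (show (0:Fin 10) ≠ 7 by decide), br_brk (show (1:Fin 10) ≠ 8 by decide),
    br_brk (show (0:Fin 10) ≠ 1 by decide), Pi.add_apply]
  fin_cases k <;> simp [Pi.single_apply, B] <;> ring

lemma B_add_left (a b y : Fin 10 → ℝ) : B (a + b) y = B a y + B b y := by
  funext k
  simp only [B, Pi.add_apply]
  split_ifs <;> ring

lemma B_smul_left (t : ℝ) (a y : Fin 10 → ℝ) : B (t • a) y = t • B a y := by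
  funext k
  simp only [B, Pi.smul_apply, smul_eq_mul]
  split_ifs <;> ring

lemma triple16 (x y z w : Fin 10 → ℝ) :
    br c16 x (br c16 y (br c16 z w)) = 0 := by
  simp only [br16]
  funext k
  fin_cases k <;> simp [B]

/-- The center as a submodule. -/
def centerSub : Submodule ℝ (Fin 10 → ℝ) where
  carrier := centerSet c16
  add_mem' := by
    intro a b ha hb y
    rw [br16, B_add_left, ← br16, ← br16, ha y, hb y, add_zero]
  zero_mem' := by
    intro y
    rw [br16]
    funext k
    simp only [B, Pi.zero_apply]
    split_ifs <;> ring
  smul_mem' := by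
    intro t a ha y
    rw [br16, B_smul_left, ← br16, ha y, smul_zero]

lemma single_mem_center (i : Fin 10) (hi : i = 2 ∨ i = 5 ∨ i = 9) (t : ℝ) :
    Pi.single i t ∈ centerSet c16 := by
  intro y
  rw [br16]
  funext k
  rcases hi with h | h | h <;> subst h <;> simp [B, Pi.single_apply]

lemma center_eq : centerSet c16 = (Submodule.span ℝ
    ({Pi.single (2 : Fin 10) (1 : ℝ), Pi.single (5 : Fin 10) (1 : ℝ),
      Pi.single (9 : Fin 10) (1 : ℝ)} : Set (Fin 10 → ℝ)) : Set (Fin 10 → ℝ)) := by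
  apply Set.Subset.antisymm
  · intro x hx
    have h0 := hx (Pi.single 0 1)
    have h1 := hx (Pi.single 1 1)
    have e1 : x 1 = 0 := by
      have := congrFun h0 2; simp [br16, B, Pi.single_apply] at this; linarith
    have e3 : x 3 = 0 := by
      have := congrFun h0 4; simp [br16, B, Pi.single_apply] at this; linarith
    have e4 : x 4 = 0 := by
      have := congrFun h0 5; simp [br16, B, Pi.single_apply] at this; linarith
    have e6 : x 6 = 0 := by
      have := congrFun h0 7; simp [br16, B, Pi.single_apply] at this; linarith
    have e7 : x 7 = 0 := by
      have := congrFun h0 9; simp [br16, B, Pi.single_apply] at this; linarith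
    have e0 : x 0 = 0 := by
      have := congrFun h1 2; simp [br16, B, Pi.single_apply] at this; linarith
    have e8 : x 8 = 0 := by
      have := congrFun h1 9; simp [br16, B, Pi.single_apply] at this; linarith
    have hxeq : x = x 2 • (Pi.single (2 : Fin 10) (1:ℝ) : Fin 10 → ℝ) +
        (x 5 • (Pi.single (5 : Fin 10) (1:ℝ) : Fin 10 → ℝ) +
          x 9 • (Pi.single (9 : Fin 10) (1:ℝ) : Fin 10 → ℝ)) := by
      funext k
      fin_cases k <;> simp [Pi.single_apply, e0, e1, e3, e4, e6, e7, e8]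
    rw [hxeq]
    simp only [SetLike.mem_coe]
    refine Submodule.add_mem _ (Submodule.smul_mem _ _ (Submodule.subset_span (by simp)))
      (Submodule.add_mem _ (Submodule.smul_mem _ _ (Submodule.subset_span (by simp)))
        (Submodule.smul_mem _ _ (Submodule.subset_span (by simp))))
  · intro x hx
    have hle : Submodule.span ℝ
        ({Pi.single (2 : Fin 10) (1 : ℝ), Pi.single (5 : Fin 10) (1 : ℝ),
          Pi.single (9 : Fin 10) (1 : ℝ)} : Set (Fin 10 → ℝ)) ≤ centerSub := by
      rw [Submodule.span_le]
      intro z hz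
      rcases hz with h | h | h <;> subst h <;>
        exact single_mem_center _ (by simp) _
    exact hle hx

lemma da_apply : ∀ i : Fin 10,
    (![(0:ℝ),0,0,1,1,1,0,0,0,0]) i = if i = 3 ∨ i = 4 ∨ i = 5 then 1 else 0 := by
  intro i; fin_cases i <;> rfl

lemma db_apply : ∀ i : Fin 10,
    (![(0:ℝ),0,0,0,0,0,1,1,1,1]) i = if i = 6 ∨ i = 7 ∨ i = 8 ∨ i = 9 then 1 else 0 := by
  intro i; fin_cases i <;> rfl

lemma isDeriv_D16a : IsDeriv c16 D16a := by
  intro x y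
  funext k
  simp only [br16, Pi.add_apply, D16a, Matrix.mulVec_diagonal]
  fin_cases k <;> simp [B, Matrix.mulVec_diagonal, da_apply] <;> ring

lemma isDeriv_D16b : IsDeriv c16 D16b := by
  intro x y
  funext k
  simp only [br16, Pi.add_apply, D16b, Matrix.mulVec_diagonal]
  fin_cases k <;> simp [B, Matrix.mulVec_diagonal, db_apply] <;> ring


set_option maxHeartbeats 4000000 in
theorem statement16 :
    ((∀ v : ℕ → (Fin 10 → ℝ), nest c16 v 3 = 0) ∧
      (∃ v : ℕ → (Fin 10 → ℝ), nest c16 v 2 ≠ 0) ∧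
      centerSet c16 = (Submodule.span ℝ
        ({Pi.single (2 : Fin 10) (1 : ℝ), Pi.single (5 : Fin 10) (1 : ℝ),
          Pi.single (9 : Fin 10) (1 : ℝ)} : Set (Fin 10 → ℝ)) : Set (Fin 10 → ℝ))) ∧
    (IsDeriv c16 D16a ∧ 0 < D16a.trace ∧ IsDeriv c16 D16b ∧ 0 < D16b.trace) ∧
    (∀ D' : Matrix (Fin 10) (Fin 10) ℝ, IsDeriv c16 D' → IsDiagonalizableR D' →
      ∃ x : Fin 10 → ℝ, x ∈ centerSet c16 ∧ x ≠ 0 ∧ D'.mulVec x = 0) := by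
  refine ⟨⟨?_, ?_, center_eq⟩, ⟨isDeriv_D16a, ?_, isDeriv_D16b, ?_⟩, ?_⟩
  · -- 3-step nilpotency
    intro v
    show br c16 (v 3) (br c16 (v 2) (br c16 (v 1) (v 0))) = 0
    exact triple16 _ _ _ _
  · -- not 2-step
    refine ⟨fun n => if n = 0 then Pi.single 3 1 else Pi.single 0 1, fun h => ?_⟩
    have h5 := congrFun h 5
    simp [nest, br16, B, Pi.single_apply] at h5
  · have : D16a.trace = 3 := by
      simp [D16a, Matrix.trace, Matrix.diag, Fin.sum_univ_succ]
      norm_num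
    rw [this]; norm_num
  · have : D16b.trace = 4 := by
      simp [D16b, Matrix.trace, Matrix.diag, Fin.sum_univ_succ]
      norm_num
    rw [this]; norm_num
  · intro D' hD _hdiag
    have b01 : br c16 (Pi.single (0 : Fin 10) 1) (Pi.single (1 : Fin 10) 1) = Pi.single (2:Fin 10) (1:ℝ) := by
      rw [br16]; funext k; fin_cases k <;> simp [B, Pi.single_apply]
    have h01 := hD (Pi.single (0 : Fin 10) 1) (Pi.single (1 : Fin 10) 1)
    rw [b01] at h01
    have E010 := congrFun h01 0
    have E011 := congrFun h01 1
    have E012 := congrFun h01 2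
    have E013 := congrFun h01 3
    have E016 := congrFun h01 6
    have b02 : br c16 (Pi.single (0 : Fin 10) 1) (Pi.single (2 : Fin 10) 1) = 0 := by
      rw [br16]; funext k; fin_cases k <;> simp [B, Pi.single_apply]
    have h02 := hD (Pi.single (0 : Fin 10) 1) (Pi.single (2 : Fin 10) 1)
    rw [b02] at h02
    have E025 := congrFun h02 5
    have E029 := congrFun h02 9
    have b03 : br c16 (Pi.single (0 : Fin 10) 1) (Pi.single (3 : Fin 10) 1) = Pi.single (4:Fin 10) (1:ℝ) := by
      rw [br16]; funext k; fin_cases k <;> simp [B, Pi.single_apply]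
    have h03 := hD (Pi.single (0 : Fin 10) 1) (Pi.single (3 : Fin 10) 1)
    rw [b03] at h03
    have E031 := congrFun h03 1
    have E033 := congrFun h03 3
    have E034 := congrFun h03 4
    have E036 := congrFun h03 6
    have E037 := congrFun h03 7
    have b04 : br c16 (Pi.single (0 : Fin 10) 1) (Pi.single (4 : Fin 10) 1) = Pi.single (5:Fin 10) (1:ℝ) := by
      rw [br16]; funext k; fin_cases k <;> simp [B, Pi.single_apply]
    have h04 := hD (Pi.single (0 : Fin 10) 1) (Pi.single (4 : Fin 10) 1)
    rw [b04] at h04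
    have E040 := congrFun h04 0
    have E041 := congrFun h04 1
    have E042 := congrFun h04 2
    have E043 := congrFun h04 3
    have E044 := congrFun h04 4
    have E045 := congrFun h04 5
    have E046 := congrFun h04 6
    have E047 := congrFun h04 7
    have E048 := congrFun h04 8
    have E049 := congrFun h04 9
    have b06 : br c16 (Pi.single (0 : Fin 10) 1) (Pi.single (6 : Fin 10) 1) = Pi.single (7:Fin 10) (1:ℝ) := by
      rw [br16]; funext k; fin_cases k <;> simp [B, Pi.single_apply]
    have h06 := hD (Pi.single (0 : Fin 10) 1) (Pi.single (6 : Fin 10) 1)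
    rw [b06] at h06
    have E061 := congrFun h06 1
    have E063 := congrFun h06 3
    have E066 := congrFun h06 6
    have E067 := congrFun h06 7
    have b07 : br c16 (Pi.single (0 : Fin 10) 1) (Pi.single (7 : Fin 10) 1) = Pi.single (9:Fin 10) (1:ℝ) := by
      rw [br16]; funext k; fin_cases k <;> simp [B, Pi.single_apply]
    have h07 := hD (Pi.single (0 : Fin 10) 1) (Pi.single (7 : Fin 10) 1)
    rw [b07] at h07
    have E070 := congrFun h07 0
    have E071 := congrFun h07 1
    have E072 := congrFun h07 2
    have E073 := congrFun h07 3
    have E074 := congrFun h07 4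
    have E076 := congrFun h07 6
    have E077 := congrFun h07 7
    have E078 := congrFun h07 8
    have E079 := congrFun h07 9
    have b08 : br c16 (Pi.single (0 : Fin 10) 1) (Pi.single (8 : Fin 10) 1) = 0 := by
      rw [br16]; funext k; fin_cases k <;> simp [B, Pi.single_apply]
    have h08 := hD (Pi.single (0 : Fin 10) 1) (Pi.single (8 : Fin 10) 1)
    rw [b08] at h08
    have E084 := congrFun h08 4
    have b12 : br c16 (Pi.single (1 : Fin 10) 1) (Pi.single (2 : Fin 10) 1) = 0 := by
      rw [br16]; funext k; fin_cases k <;> simp [B, Pi.single_apply]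
    have h12 := hD (Pi.single (1 : Fin 10) 1) (Pi.single (2 : Fin 10) 1)
    rw [b12] at h12
    have E129 := congrFun h12 9
    have b13 : br c16 (Pi.single (1 : Fin 10) 1) (Pi.single (3 : Fin 10) 1) = Pi.single (5:Fin 10) (1:ℝ) := by
      rw [br16]; funext k; fin_cases k <;> simp [B, Pi.single_apply]
    have h13 := hD (Pi.single (1 : Fin 10) 1) (Pi.single (3 : Fin 10) 1)
    rw [b13] at h13
    have E135 := congrFun h13 5
    have E138 := congrFun h13 8
    have b16 : br c16 (Pi.single (1 : Fin 10) 1) (Pi.single (6 : Fin 10) 1) = Pi.single (8:Fin 10) (1:ℝ) := by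
      rw [br16]; funext k; fin_cases k <;> simp [B, Pi.single_apply]
    have h16 := hD (Pi.single (1 : Fin 10) 1) (Pi.single (6 : Fin 10) 1)
    rw [b16] at h16
    have E168 := congrFun h16 8
    have b18 : br c16 (Pi.single (1 : Fin 10) 1) (Pi.single (8 : Fin 10) 1) = Pi.single (9:Fin 10) (1:ℝ) := by
      rw [br16]; funext k; fin_cases k <;> simp [B, Pi.single_apply]
    have h18 := hD (Pi.single (1 : Fin 10) 1) (Pi.single (8 : Fin 10) 1)
    rw [b18] at h18
    have E185 := congrFun h18 5
    have E189 := congrFun h18 9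
    simp [br16, B, Matrix.mulVec_single, Matrix.mulVec_zero, Pi.single_apply,
      Pi.add_apply, Pi.zero_apply] at E010 E011 E012 E013 E016 E025 E029 E031 E033 E034 E036 E037 E040 E041 E042 E043 E044 E045 E046 E047 E048 E049 E061 E063 E066 E067 E070 E071 E072 E073 E074 E076 E077 E078 E079 E084 E129 E135 E138 E168 E185 E189
    have T02 : D' 0 2 = 0 := by linarith only [E010]
    have T12 : D' 1 2 = 0 := by linarith only [E011]
    have T22 : D' 2 2 = 0 := by linarith only [E012, E034, E045, E067, E079, E135, E168, E189]
    have T32 : D' 3 2 = 0 := by linarith only [E013]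
    have T42 : D' 4 2 = 0 := by linarith only [E025]
    have T62 : D' 6 2 = 0 := by linarith only [E016]
    have T72 : D' 7 2 = 0 := by linarith only [E029]
    have T82 : D' 8 2 = 0 := by linarith only [E129]
    have T05 : D' 0 5 = 0 := by linarith only [E040]
    have T15 : D' 1 5 = 0 := by linarith only [E041]
    have T25 : D' 2 5 = 0 := by linarith only [E031, E042]
    have T35 : D' 3 5 = 0 := by linarith only [E043]
    have T45 : D' 4 5 = 0 := by linarith only [E033, E044]
    have T65 : D' 6 5 = 0 := by linarith only [E046]
    have T75 : D' 7 5 = 0 := by linarith only [E036, E047]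
    have T85 : D' 8 5 = 0 := by linarith only [E048]
    have T95 : D' 9 5 = 0 := by linarith only [E037, E048, E049, E138]
    have T09 : D' 0 9 = 0 := by linarith only [E070]
    have T19 : D' 1 9 = 0 := by linarith only [E071]
    have T29 : D' 2 9 = 0 := by linarith only [E061, E072]
    have T39 : D' 3 9 = 0 := by linarith only [E073]
    have T49 : D' 4 9 = 0 := by linarith only [E063, E074]
    have T59 : D' 5 9 = 0 := by linarith only [E084, E185]
    have T69 : D' 6 9 = 0 := by linarith only [E076]
    have T79 : D' 7 9 = 0 := by linarith only [E066, E077]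
    have T89 : D' 8 9 = 0 := by linarith only [E078]
    by_cases h5 : D' 5 5 = 0
    · refine ⟨Pi.single 5 1, single_mem_center _ (by simp) _, ?_, ?_⟩
      · intro h
        have := congrFun h 5
        simp [Pi.single_apply] at this
      · funext k
        simp only [Matrix.mulVec_single_one, Matrix.col_apply, mul_one, Pi.zero_apply]
        fin_cases k <;> first
          | exact h5
          | simp [T05, T15, T25, T35, T45, T65, T75, T85, T95]
    · by_cases h9 : D' 9 9 = 0
      · refine ⟨Pi.single 9 1, single_mem_center _ (by simp) _, ?_, ?_⟩
        · intro h
          have := congrFun h 9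
          simp [Pi.single_apply] at this
        · funext k
          simp only [Matrix.mulVec_single_one, Matrix.col_apply, mul_one, Pi.zero_apply]
          fin_cases k <;> first
            | exact h9
            | simp [T09, T19, T29, T39, T49, T59, T69, T79, T89]
      · refine ⟨(Pi.single 2 1 : Fin 10 → ℝ) - (D' 5 2 / D' 5 5) • (Pi.single 5 1 : Fin 10 → ℝ)
            - (D' 9 2 / D' 9 9) • (Pi.single 9 1 : Fin 10 → ℝ), ?_, ?_, ?_⟩
        · have hmem : (Pi.single 2 1 : Fin 10 → ℝ) - (D' 5 2 / D' 5 5) • (Pi.single 5 1 : Fin 10 → ℝ)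
              - (D' 9 2 / D' 9 9) • (Pi.single 9 1 : Fin 10 → ℝ) ∈ centerSub :=
            Submodule.sub_mem _ (Submodule.sub_mem _ (single_mem_center _ (by simp) _)
              (Submodule.smul_mem _ _ (single_mem_center _ (by simp) _)))
              (Submodule.smul_mem _ _ (single_mem_center _ (by simp) _))
          exact hmem
        · intro h
          have := congrFun h 2
          simp [Pi.single_apply, Pi.sub_apply, Pi.smul_apply] at this
        · rw [Matrix.mulVec_sub, Matrix.mulVec_sub, Matrix.mulVec_smul, Matrix.mulVec_smul]
          funext k
          simp only [Matrix.mulVec_single_one, Matrix.col_apply, mul_one, Pi.sub_apply, Pi.smul_apply,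
            smul_eq_mul, Pi.zero_apply]
          fin_cases k
          · simp [T02, T05, T09]
          · simp [T12, T15, T19]
          · simp [T22, T25, T29]
          · simp [T32, T35, T39]
          · simp [T42, T45, T49]
          · simp only [show (⟨5, by norm_num⟩ : Fin 10) = 5 from rfl, T59]
            field_simp
            ring
          · simp [T62, T65, T69]
          · simp [T72, T75, T79]
          · simp [T82, T85, T89]
          · simp only [show (⟨9, by norm_num⟩ : Fin 10) = 9 from rfl, T95]
            field_simp
            ring

end RNPaper
end

section
/- Let 𝔫₁ be the 12-dimensional nilpotent Lie algebra with basis X₁,X₂,X₃, Y₁,Y₂,Y₃, Z₁,Z₂,Z₃, U₁,U₂,U₃ and nonzero basis brackets (up to antisymmetry) [X₁,X₂]=Y₁, [X₂,X₃]=Y₂, [X₃,X₁]=Y₃, [X₁,Y₁]=Z₁, [X₂,Y₂]=Z₂, [X₃,Y₃]=Z₃, [X₁,Z₁]=U₁, [X₂,Z₂]=U₂, [X₃,Z₃]=U₃, [X₁,Y₃]=U₃, [X₂,Y₁]=U₁, [X₃,Y₂]=U₂. Then every derivation D of 𝔫₁ satisfies D(𝔫₁) ⊆ [𝔫₁,𝔫₁];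 consequently every derivation of 𝔫₁ is nilpotent, i.e. 𝔫₁ is characteristically nilpotent, even though the given basis is nice. -/
open scoped BigOperators

namespace RNPaper

variable {n : ℕ}

/-- Example 4.6 (ex4), first algebra `𝔫₁`: basis `X₁,X₂,X₃ = e₀,e₁,e₂`,
`Y₁,Y₂,Y₃ = e₃,e₄,e₅`, `Z₁,Z₂,Z₃ = e₆,e₇,e₈`, `U₁,U₂,U₃ = e₉,e₁₀,e₁₁`. -/
def c19 : SC 12 :=
  brk 0 1 3 1 + brk 1 2 4 1 + brk 2 0 5 1 +
    brk 0 3 6 1 + brk 1 4 7 1 + brk 2 5 8 1 +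
    brk 0 6 9 1 + brk 1 7 10 1 + brk 2 8 11 1 +
    brk 0 5 11 1 + brk 1 3 9 1 + brk 2 4 10 1


lemma sum12 {β : Type*} [AddCommMonoid β] (f : Fin 12 → β) :
    ∑ i, f i = f 0 + f 1 + f 2 + f 3 + f 4 + f 5 + f 6 + f 7 + f 8 + f 9 + f 10 + f 11 := by
  rw [Fin.sum_univ_castSucc, Fin.sum_univ_castSucc, Fin.sum_univ_castSucc,
    Fin.sum_univ_castSucc, Fin.sum_univ_eight]
  rfl

lemma br_single (c : SC n) (i j : Fin n) :
    br c (Pi.single i 1) (Pi.single j 1) = fun k => c i j k := by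
  funext k
  simp [br, Pi.single_apply, ite_mul, Finset.sum_ite_eq]

lemma br_single_left (c : SC n) (x : Fin n → ℝ) (j : Fin n) :
    br c x (Pi.single j 1) = fun k => ∑ p, x p * c p j k := by
  funext k
  simp [br, Pi.single_apply, mul_ite, mul_comm, Finset.sum_ite_eq]

lemma br_single_right (c : SC n) (y : Fin n → ℝ) (i : Fin n) :
    br c (Pi.single i 1) y = fun k => ∑ q, y q * c i q k := by
  funext k
  simp [br, Pi.single_apply, ite_mul, Finset.sum_ite_eq]

lemma deriv_basis {c : SC n} {D : Matrix (Fin n) (Fin n) ℝ} (hD : IsDeriv c D)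
    (i j m : Fin n) :
    ∑ k, D m k * c i j k = (∑ p, D p i * c p j m) + (∑ q, D q j * c i q m) := by
  have h := congrFun (hD (Pi.single i 1) (Pi.single j 1)) m
  rw [br_single, br_single_left, br_single_right] at h
  simpa [Matrix.mulVec, dotProduct, Pi.single_apply, mul_ite,
    Finset.sum_ite_eq, Finset.sum_ite_eq'] using h

def brkZ (i j k : Fin 12) (v : ℤ) : Fin 12 → Fin 12 → Fin 12 → ℤ :=
  fun p q r =>
    if p = i ∧ q = j ∧ r = k then v else if p = j ∧ q = i ∧ r = k then -v else 0

def cZ : Fin 12 → Fin 12 → Fin 12 → ℤ := fun i j k =>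
  brkZ 0 1 3 1 i j k + brkZ 1 2 4 1 i j k + brkZ 2 0 5 1 i j k +
    brkZ 0 3 6 1 i j k + brkZ 1 4 7 1 i j k + brkZ 2 5 8 1 i j k +
    brkZ 0 6 9 1 i j k + brkZ 1 7 10 1 i j k + brkZ 2 8 11 1 i j k +
    brkZ 0 5 11 1 i j k + brkZ 1 3 9 1 i j k + brkZ 2 4 10 1 i j k

lemma c19_cast (i j k : Fin 12) : c19 i j k = ((cZ i j k : ℤ) : ℝ) := by
  simp only [c19, cZ, brk, brkZ, Pi.add_apply, Int.cast_add,
    apply_ite (fun z : ℤ => (z : ℝ)), Int.cast_one, Int.cast_neg, Int.cast_zero]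

def suppL : List (Fin 12 × Fin 12 × Fin 12) := [(0, 1, 3), (1, 0, 3), (1, 2, 4), (2, 1, 4), (2, 0, 5), (0, 2, 5), (0, 3, 6), (3, 0, 6), (1, 4, 7), (4, 1, 7), (2, 5, 8), (5, 2, 8), (0, 6, 9), (6, 0, 9), (1, 7, 10), (7, 1, 10), (2, 8, 11), (8, 2, 11), (0, 5, 11), (5, 0, 11), (1, 3, 9), (3, 1, 9), (2, 4, 10), (4, 2, 10)]

lemma supp_mem : ∀ i j k : Fin 12, cZ i j k ≠ 0 → (i, j, k) ∈ suppL := by decide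

lemma nice1aux : ∀ a b : Fin suppL.length, (suppL.get a).1 = (suppL.get b).1 →
    (suppL.get a).2.1 = (suppL.get b).2.1 → (suppL.get a).2.2 = (suppL.get b).2.2 := by
  decide

lemma nice2aux : ∀ a b : Fin suppL.length, (suppL.get a).2.2 = (suppL.get b).2.2 →
    ({(suppL.get a).1, (suppL.get a).2.1} : Finset (Fin 12)) =
        {(suppL.get b).1, (suppL.get b).2.1} ∨
      Disjoint ({(suppL.get a).1, (suppL.get a).2.1} : Finset (Fin 12))
        ({(suppL.get b).1, (suppL.get b).2.1} : Finset (Fin 12)) := by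
  decide

lemma nice1 : ∀ i j k l : Fin 12, cZ i j k ≠ 0 → cZ i j l ≠ 0 → k = l := by
  intro i j k l h1 h2
  obtain ⟨a, ha⟩ := List.get_of_mem (supp_mem i j k h1)
  obtain ⟨b, hb⟩ := List.get_of_mem (supp_mem i j l h2)
  have := nice1aux a b
  rw [ha, hb] at this
  exact this rfl rfl

lemma nice2 : ∀ i j r s k : Fin 12, cZ i j k ≠ 0 → cZ r s k ≠ 0 →
    ({i, j} : Finset (Fin 12)) = {r, s} ∨
      Disjoint ({i, j} : Finset (Fin 12)) ({r, s} : Finset (Fin 12)) := by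
  intro i j r s k h1 h2
  obtain ⟨a, ha⟩ := List.get_of_mem (supp_mem i j k h1)
  obtain ⟨b, hb⟩ := List.get_of_mem (supp_mem r s k h2)
  have := nice2aux a b
  rw [ha, hb] at this
  exact this rfl

lemma pow4_eq_zero (M : Matrix (Fin 12) (Fin 12) ℝ)
    (h : ∀ a b : Fin 12, (a : ℕ) / 3 ≤ (b : ℕ) / 3 → M a b = 0) : M ^ 4 = 0 := by
  have h4 : M ^ 4 = M * M * M * M := by rw [pow_succ, pow_succ, pow_succ, pow_one]
  rw [h4]
  ext a b
  rw [Matrix.zero_apply]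
  simp only [Matrix.mul_apply, Finset.sum_mul]
  refine Finset.sum_eq_zero fun x _ => Finset.sum_eq_zero fun y _ =>
    Finset.sum_eq_zero fun z _ => ?_
  rcases le_or_gt ((a : ℕ) / 3) ((z : ℕ) / 3) with h1 | h1
  · rw [h a z h1]; ring
  rcases le_or_gt ((z : ℕ) / 3) ((y : ℕ) / 3) with h2 | h2
  · rw [h z y h2]; ring
  rcases le_or_gt ((y : ℕ) / 3) ((x : ℕ) / 3) with h3 | h3
  · rw [h y x h3]; ring
  rcases le_or_gt ((x : ℕ) / 3) ((b : ℕ) / 3) with hb4 | hb4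
  · rw [h x b hb4]; ring
  exfalso
  have ha' := a.isLt
  omega

lemma single_scaled_mem {p : Submodule ℝ (Fin 12 → ℝ)} (k : Fin 12) (c : ℝ)
    (h : Pi.single k (1 : ℝ) ∈ p) : Pi.single k c ∈ p := by
  have e : Pi.single k c = c • (Pi.single k (1 : ℝ) : Fin 12 → ℝ) := by
    funext m
    by_cases h' : m = k
    · subst h'; simp
    · simp [Pi.single_apply, h']
  rw [e]; exact p.smul_mem c h

lemma gen3 : Pi.single (3 : Fin 12) (1 : ℝ) = br c19 (Pi.single 0 1) (Pi.single 1 1) := by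
  rw [br_single]
  funext m
  fin_cases m <;> simp (config := { decide := true }) [c19, brk, Pi.single_apply]

lemma gen4 : Pi.single (4 : Fin 12) (1 : ℝ) = br c19 (Pi.single 1 1) (Pi.single 2 1) := by
  rw [br_single]
  funext m
  fin_cases m <;> simp (config := { decide := true }) [c19, brk, Pi.single_apply]

lemma gen5 : Pi.single (5 : Fin 12) (1 : ℝ) = br c19 (Pi.single 2 1) (Pi.single 0 1) := by
  rw [br_single]
  funext m
  fin_cases m <;> simp (config := { decide := true }) [c19, brk, Pi.single_apply]

lemma gen6 : Pi.single (6 : Fin 12) (1 : ℝ) = br c19 (Pi.single 0 1) (Pi.single 3 1) := by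
  rw [br_single]
  funext m
  fin_cases m <;> simp (config := { decide := true }) [c19, brk, Pi.single_apply]

lemma gen7 : Pi.single (7 : Fin 12) (1 : ℝ) = br c19 (Pi.single 1 1) (Pi.single 4 1) := by
  rw [br_single]
  funext m
  fin_cases m <;> simp (config := { decide := true }) [c19, brk, Pi.single_apply]

lemma gen8 : Pi.single (8 : Fin 12) (1 : ℝ) = br c19 (Pi.single 2 1) (Pi.single 5 1) := by
  rw [br_single]
  funext m
  fin_cases m <;> simp (config := { decide := true }) [c19, brk, Pi.single_apply]

lemma gen9 : Pi.single (9 : Fin 12) (1 : ℝ) = br c19 (Pi.single 0 1) (Pi.single 6 1) := by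
  rw [br_single]
  funext m
  fin_cases m <;> simp (config := { decide := true }) [c19, brk, Pi.single_apply]

lemma gen10 : Pi.single (10 : Fin 12) (1 : ℝ) = br c19 (Pi.single 1 1) (Pi.single 7 1) := by
  rw [br_single]
  funext m
  fin_cases m <;> simp (config := { decide := true }) [c19, brk, Pi.single_apply]

lemma gen11 : Pi.single (11 : Fin 12) (1 : ℝ) = br c19 (Pi.single 2 1) (Pi.single 8 1) := by
  rw [br_single]
  funext m
  fin_cases m <;> simp (config := { decide := true }) [c19, brk, Pi.single_apply]

set_option maxHeartbeats 4000000 in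
/-- `𝔫₁` is characteristically nilpotent although its basis is nice: every derivation
maps into `[𝔫₁,𝔫₁]` and hence is nilpotent. -/
theorem statement19 :
    IsNice c19 ∧
    ∀ D : Matrix (Fin 12) (Fin 12) ℝ, IsDeriv c19 D →
      (∀ x : Fin 12 → ℝ, D.mulVec x ∈
        Submodule.span ℝ {z : Fin 12 → ℝ | ∃ a b : Fin 12 → ℝ, z = br c19 a b}) ∧
      IsNilpotent D := by
  constructor
  · constructor
    · intro i j k l hk hl
      exact nice1 i j k l (fun h => hk (by rw [c19_cast, h, Int.cast_zero]))
        (fun h => hl (by rw [c19_cast, h, Int.cast_zero]))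
    · intro i j r s k h1 h2
      exact nice2 i j r s k (fun h => h1 (by rw [c19_cast, h, Int.cast_zero]))
        (fun h => h2 (by rw [c19_cast, h, Int.cast_zero]))
  · intro D hD
    have Heq_0_1_0 := deriv_basis hD 0 1 0
    have Heq_0_1_1 := deriv_basis hD 0 1 1
    have Heq_0_1_2 := deriv_basis hD 0 1 2
    have Heq_0_1_3 := deriv_basis hD 0 1 3
    have Heq_0_1_4 := deriv_basis hD 0 1 4
    have Heq_0_1_5 := deriv_basis hD 0 1 5
    have Heq_0_2_0 := deriv_basis hD 0 2 0
    have Heq_0_2_1 := deriv_basis hD 0 2 1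
    have Heq_0_2_2 := deriv_basis hD 0 2 2
    have Heq_0_2_3 := deriv_basis hD 0 2 3
    have Heq_0_2_4 := deriv_basis hD 0 2 4
    have Heq_0_2_5 := deriv_basis hD 0 2 5
    have Heq_0_3_0 := deriv_basis hD 0 3 0
    have Heq_0_3_1 := deriv_basis hD 0 3 1
    have Heq_0_3_2 := deriv_basis hD 0 3 2
    have Heq_0_3_3 := deriv_basis hD 0 3 3
    have Heq_0_3_4 := deriv_basis hD 0 3 4
    have Heq_0_3_5 := deriv_basis hD 0 3 5
    have Heq_0_3_6 := deriv_basis hD 0 3 6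
    have Heq_0_3_7 := deriv_basis hD 0 3 7
    have Heq_0_3_8 := deriv_basis hD 0 3 8
    have Heq_0_4_3 := deriv_basis hD 0 4 3
    have Heq_0_4_5 := deriv_basis hD 0 4 5
    have Heq_0_4_6 := deriv_basis hD 0 4 6
    have Heq_0_4_7 := deriv_basis hD 0 4 7
    have Heq_0_4_10 := deriv_basis hD 0 4 10
    have Heq_0_4_11 := deriv_basis hD 0 4 11
    have Heq_0_5_0 := deriv_basis hD 0 5 0
    have Heq_0_5_1 := deriv_basis hD 0 5 1
    have Heq_0_5_2 := deriv_basis hD 0 5 2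
    have Heq_0_5_3 := deriv_basis hD 0 5 3
    have Heq_0_5_4 := deriv_basis hD 0 5 4
    have Heq_0_5_5 := deriv_basis hD 0 5 5
    have Heq_0_5_6 := deriv_basis hD 0 5 6
    have Heq_0_5_7 := deriv_basis hD 0 5 7
    have Heq_0_5_8 := deriv_basis hD 0 5 8
    have Heq_0_5_10 := deriv_basis hD 0 5 10
    have Heq_0_5_11 := deriv_basis hD 0 5 11
    have Heq_0_6_0 := deriv_basis hD 0 6 0
    have Heq_0_6_1 := deriv_basis hD 0 6 1
    have Heq_0_6_2 := deriv_basis hD 0 6 2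
    have Heq_0_6_3 := deriv_basis hD 0 6 3
    have Heq_0_6_4 := deriv_basis hD 0 6 4
    have Heq_0_6_5 := deriv_basis hD 0 6 5
    have Heq_0_6_6 := deriv_basis hD 0 6 6
    have Heq_0_6_7 := deriv_basis hD 0 6 7
    have Heq_0_6_8 := deriv_basis hD 0 6 8
    have Heq_0_6_9 := deriv_basis hD 0 6 9
    have Heq_0_6_10 := deriv_basis hD 0 6 10
    have Heq_0_6_11 := deriv_basis hD 0 6 11
    have Heq_0_7_3 := deriv_basis hD 0 7 3
    have Heq_0_7_5 := deriv_basis hD 0 7 5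
    have Heq_0_7_6 := deriv_basis hD 0 7 6
    have Heq_0_7_9 := deriv_basis hD 0 7 9
    have Heq_0_7_11 := deriv_basis hD 0 7 11
    have Heq_0_8_3 := deriv_basis hD 0 8 3
    have Heq_0_8_5 := deriv_basis hD 0 8 5
    have Heq_0_8_6 := deriv_basis hD 0 8 6
    have Heq_0_8_9 := deriv_basis hD 0 8 9
    have Heq_0_8_11 := deriv_basis hD 0 8 11
    have Heq_0_10_3 := deriv_basis hD 0 10 3
    have Heq_0_10_5 := deriv_basis hD 0 10 5
    have Heq_0_10_6 := deriv_basis hD 0 10 6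
    have Heq_0_10_9 := deriv_basis hD 0 10 9
    have Heq_0_10_11 := deriv_basis hD 0 10 11
    have Heq_0_11_9 := deriv_basis hD 0 11 9
    have Heq_1_2_0 := deriv_basis hD 1 2 0
    have Heq_1_2_3 := deriv_basis hD 1 2 3
    have Heq_1_2_4 := deriv_basis hD 1 2 4
    have Heq_1_2_5 := deriv_basis hD 1 2 5
    have Heq_1_3_9 := deriv_basis hD 1 3 9
    have Heq_1_4_0 := deriv_basis hD 1 4 0
    have Heq_1_4_4 := deriv_basis hD 1 4 4
    have Heq_1_4_7 := deriv_basis hD 1 4 7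
    have Heq_1_4_8 := deriv_basis hD 1 4 8
    have Heq_1_5_8 := deriv_basis hD 1 5 8
    have Heq_1_7_0 := deriv_basis hD 1 7 0
    have Heq_1_7_4 := deriv_basis hD 1 7 4
    have Heq_1_7_7 := deriv_basis hD 1 7 7
    have Heq_1_7_8 := deriv_basis hD 1 7 8
    have Heq_1_7_9 := deriv_basis hD 1 7 9
    have Heq_1_7_10 := deriv_basis hD 1 7 10
    have Heq_1_7_11 := deriv_basis hD 1 7 11
    have Heq_1_8_3 := deriv_basis hD 1 8 3
    have Heq_1_8_7 := deriv_basis hD 1 8 7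
    have Heq_1_8_10 := deriv_basis hD 1 8 10
    have Heq_2_4_10 := deriv_basis hD 2 4 10
    have Heq_2_5_8 := deriv_basis hD 2 5 8
    have Heq_2_8_9 := deriv_basis hD 2 8 9
    have Heq_2_8_11 := deriv_basis hD 2 8 11
    simp (config := { decide := true }) only [sum12, c19, brk, Pi.add_apply,
      mul_zero, mul_one, mul_neg, zero_add, add_zero, neg_zero, neg_neg,
      if_true, if_false, ite_true, ite_false] at Heq_0_1_0 Heq_0_1_1 Heq_0_1_2 Heq_0_1_3 Heq_0_1_4 Heq_0_1_5 Heq_0_2_0 Heq_0_2_1 Heq_0_2_2 Heq_0_2_3 Heq_0_2_4 Heq_0_2_5 Heq_0_3_0 Heq_0_3_1 Heq_0_3_2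
    simp (config := { decide := true }) only [sum12, c19, brk, Pi.add_apply,
      mul_zero, mul_one, mul_neg, zero_add, add_zero, neg_zero, neg_neg,
      if_true, if_false, ite_true, ite_false] at Heq_0_3_3 Heq_0_3_4 Heq_0_3_5 Heq_0_3_6 Heq_0_3_7 Heq_0_3_8 Heq_0_4_3 Heq_0_4_5 Heq_0_4_6 Heq_0_4_7 Heq_0_4_10 Heq_0_4_11 Heq_0_5_0 Heq_0_5_1 Heq_0_5_2
    simp (config := { decide := true }) only [sum12, c19, brk, Pi.add_apply,
      mul_zero, mul_one, mul_neg, zero_add, add_zero, neg_zero, neg_neg,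
      if_true, if_false, ite_true, ite_false] at Heq_0_5_3 Heq_0_5_4 Heq_0_5_5 Heq_0_5_6 Heq_0_5_7 Heq_0_5_8 Heq_0_5_10 Heq_0_5_11 Heq_0_6_0 Heq_0_6_1 Heq_0_6_2 Heq_0_6_3 Heq_0_6_4 Heq_0_6_5 Heq_0_6_6
    simp (config := { decide := true }) only [sum12, c19, brk, Pi.add_apply,
      mul_zero, mul_one, mul_neg, zero_add, add_zero, neg_zero, neg_neg,
      if_true, if_false, ite_true, ite_false] at Heq_0_6_7 Heq_0_6_8 Heq_0_6_9 Heq_0_6_10 Heq_0_6_11 Heq_0_7_3 Heq_0_7_5 Heq_0_7_6 Heq_0_7_9 Heq_0_7_11 Heq_0_8_3 Heq_0_8_5 Heq_0_8_6 Heq_0_8_9 Heq_0_8_11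
    simp (config := { decide := true }) only [sum12, c19, brk, Pi.add_apply,
      mul_zero, mul_one, mul_neg, zero_add, add_zero, neg_zero, neg_neg,
      if_true, if_false, ite_true, ite_false] at Heq_0_10_3 Heq_0_10_5 Heq_0_10_6 Heq_0_10_9 Heq_0_10_11 Heq_0_11_9 Heq_1_2_0 Heq_1_2_3 Heq_1_2_4 Heq_1_2_5 Heq_1_3_9 Heq_1_4_0 Heq_1_4_4 Heq_1_4_7 Heq_1_4_8
    simp (config := { decide := true }) only [sum12, c19, brk, Pi.add_apply,
      mul_zero, mul_one, mul_neg, zero_add, add_zero, neg_zero, neg_neg,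
      if_true, if_false, ite_true, ite_false] at Heq_1_5_8 Heq_1_7_0 Heq_1_7_4 Heq_1_7_7 Heq_1_7_8 Heq_1_7_9 Heq_1_7_10 Heq_1_7_11 Heq_1_8_3 Heq_1_8_7 Heq_1_8_10 Heq_2_4_10 Heq_2_5_8 Heq_2_8_9 Heq_2_8_11
    have Z_0_0 : D 0 0 = 0 := by linear_combination ((-4 : ℝ)/7) * Heq_0_6_9 + ((4 : ℝ)/7) * Heq_1_3_9 + ((-4 : ℝ)/7) * Heq_0_3_6 + ((-2 : ℝ)/7) * Heq_1_7_10 + ((-2 : ℝ)/7) * Heq_1_4_7 + ((1 : ℝ)/7) * Heq_0_5_11 + ((2 : ℝ)/7) * Heq_2_4_10 + ((-1 : ℝ)/7) * Heq_2_8_11 + ((-1 : ℝ)/7) * Heq_2_5_8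
    have Z_0_1 : D 0 1 = 0 := by linear_combination (1 : ℝ) * Heq_1_2_5 + (1 : ℝ) * Heq_0_4_11
    have Z_0_2 : D 0 2 = 0 := by linear_combination (1 : ℝ) * Heq_1_2_3 + (1 : ℝ) * Heq_0_4_6
    have Z_0_3 : D 0 3 = 0 := by linear_combination (1 : ℝ) * Heq_0_1_0
    have Z_0_4 : D 0 4 = 0 := by linear_combination (1 : ℝ) * Heq_1_2_0
    have Z_0_5 : D 0 5 = 0 := by linear_combination (-1 : ℝ) * Heq_0_2_0
    have Z_0_6 : D 0 6 = 0 := by linear_combination (1 : ℝ) * Heq_0_3_0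
    have Z_0_7 : D 0 7 = 0 := by linear_combination (1 : ℝ) * Heq_1_4_0
    have Z_0_8 : D 0 8 = 0 := by linear_combination (1 : ℝ) * Heq_1_8_3
    have Z_0_9 : D 0 9 = 0 := by linear_combination (1 : ℝ) * Heq_0_6_0
    have Z_0_10 : D 0 10 = 0 := by linear_combination (1 : ℝ) * Heq_1_7_0
    have Z_0_11 : D 0 11 = 0 := by linear_combination (1 : ℝ) * Heq_0_5_0
    have Z_1_0 : D 1 0 = 0 := by linear_combination (-1 : ℝ) * Heq_0_4_7
    have Z_1_1 : D 1 1 = 0 := by linear_combination ((-1 : ℝ)/7) * Heq_0_3_6 + ((-1 : ℝ)/7) * Heq_0_6_9 + ((1 : ℝ)/7) * Heq_1_3_9 + ((-4 : ℝ)/7) * Heq_1_7_10 + ((-4 : ℝ)/7) * Heq_1_4_7 + ((2 : ℝ)/7) * Heq_0_5_11 + ((4 : ℝ)/7) * Heq_2_4_10 + ((-2 : ℝ)/7) * Heq_2_8_11 + ((-2 : ℝ)/7) * Heq_2_5_8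
    have Z_1_2 : D 1 2 = 0 := by linear_combination (-1 : ℝ) * Heq_0_2_3 + (1 : ℝ) * Heq_0_5_6 + (1 : ℝ) * Heq_0_11_9
    have Z_1_3 : D 1 3 = 0 := by linear_combination (1 : ℝ) * Heq_0_1_1
    have Z_1_4 : D 1 4 = 0 := by linear_combination (-1 : ℝ) * Heq_0_4_3
    have Z_1_5 : D 1 5 = 0 := by linear_combination (-1 : ℝ) * Heq_0_2_1
    have Z_1_6 : D 1 6 = 0 := by linear_combination (1 : ℝ) * Heq_0_3_1
    have Z_1_7 : D 1 7 = 0 := by linear_combination (-1 : ℝ) * Heq_0_7_3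
    have Z_1_8 : D 1 8 = 0 := by linear_combination (-1 : ℝ) * Heq_0_8_3
    have Z_1_9 : D 1 9 = 0 := by linear_combination (1 : ℝ) * Heq_0_6_1
    have Z_1_10 : D 1 10 = 0 := by linear_combination (-1 : ℝ) * Heq_0_10_3
    have Z_1_11 : D 1 11 = 0 := by linear_combination (1 : ℝ) * Heq_0_5_1
    have Z_2_0 : D 2 0 = 0 := by linear_combination (-1 : ℝ) * Heq_0_4_10
    have Z_2_1 : D 2 1 = 0 := by linear_combination (-1 : ℝ) * Heq_1_5_8
    have Z_2_2 : D 2 2 = 0 := by linear_combination ((4 : ℝ)/7) * Heq_0_5_11 + ((-2 : ℝ)/7) * Heq_0_6_9 + ((2 : ℝ)/7) * Heq_1_3_9 + ((-2 : ℝ)/7) * Heq_0_3_6 + ((-1 : ℝ)/7) * Heq_1_7_10 + ((-1 : ℝ)/7) * Heq_1_4_7 + ((1 : ℝ)/7) * Heq_2_4_10 + ((-4 : ℝ)/7) * Heq_2_8_11 + ((-4 : ℝ)/7) * Heq_2_5_8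
    have Z_2_3 : D 2 3 = 0 := by linear_combination (1 : ℝ) * Heq_0_1_2
    have Z_2_4 : D 2 4 = 0 := by linear_combination (1 : ℝ) * Heq_0_4_5
    have Z_2_5 : D 2 5 = 0 := by linear_combination (-1 : ℝ) * Heq_0_2_2
    have Z_2_6 : D 2 6 = 0 := by linear_combination (1 : ℝ) * Heq_0_3_2
    have Z_2_7 : D 2 7 = 0 := by linear_combination (1 : ℝ) * Heq_0_7_5
    have Z_2_8 : D 2 8 = 0 := by linear_combination (1 : ℝ) * Heq_0_8_5
    have Z_2_9 : D 2 9 = 0 := by linear_combination (1 : ℝ) * Heq_0_6_2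
    have Z_2_10 : D 2 10 = 0 := by linear_combination (1 : ℝ) * Heq_0_10_5
    have Z_2_11 : D 2 11 = 0 := by linear_combination (1 : ℝ) * Heq_0_5_2
    have Z_3_3 : D 3 3 = 0 := by linear_combination (1 : ℝ) * Heq_0_1_3 + ((-6 : ℝ)/7) * Heq_1_7_10 + ((-6 : ℝ)/7) * Heq_1_4_7 + ((3 : ℝ)/7) * Heq_0_5_11 + ((6 : ℝ)/7) * Heq_2_4_10 + ((-3 : ℝ)/7) * Heq_2_8_11 + ((-5 : ℝ)/7) * Heq_0_6_9 + ((5 : ℝ)/7) * Heq_1_3_9 + ((-5 : ℝ)/7) * Heq_0_3_6 + ((-3 : ℝ)/7) * Heq_2_5_8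
    have Z_3_4 : D 3 4 = 0 := by linear_combination (-1 : ℝ) * Heq_0_4_6
    have Z_3_5 : D 3 5 = 0 := by linear_combination (-1 : ℝ) * Heq_0_5_6 + (-1 : ℝ) * Heq_0_11_9
    have Z_3_6 : D 3 6 = 0 := by linear_combination (1 : ℝ) * Heq_0_3_3 + (1 : ℝ) * Heq_0_1_1
    have Z_3_7 : D 3 7 = 0 := by linear_combination (-1 : ℝ) * Heq_0_7_6
    have Z_3_8 : D 3 8 = 0 := by linear_combination (-1 : ℝ) * Heq_0_8_6
    have Z_3_9 : D 3 9 = 0 := by linear_combination (1 : ℝ) * Heq_0_6_3 + (1 : ℝ) * Heq_0_3_1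
    have Z_3_10 : D 3 10 = 0 := by linear_combination (-1 : ℝ) * Heq_0_10_6
    have Z_3_11 : D 3 11 = 0 := by linear_combination (1 : ℝ) * Heq_0_5_3 + (-1 : ℝ) * Heq_0_2_1
    have Z_4_3 : D 4 3 = 0 := by linear_combination (1 : ℝ) * Heq_0_4_10 + (1 : ℝ) * Heq_0_1_4
    have Z_4_4 : D 4 4 = 0 := by linear_combination (1 : ℝ) * Heq_1_2_4 + ((-3 : ℝ)/7) * Heq_0_3_6 + ((6 : ℝ)/7) * Heq_0_5_11 + ((-3 : ℝ)/7) * Heq_0_6_9 + ((3 : ℝ)/7) * Heq_1_3_9 + ((-6 : ℝ)/7) * Heq_2_8_11 + ((-6 : ℝ)/7) * Heq_2_5_8 + ((-5 : ℝ)/7) * Heq_1_7_10 + ((-5 : ℝ)/7) * Heq_1_4_7 + ((5 : ℝ)/7) * Heq_2_4_10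
    have Z_4_5 : D 4 5 = 0 := by linear_combination (-1 : ℝ) * Heq_0_2_4 + (1 : ℝ) * Heq_0_4_7
    have Z_4_6 : D 4 6 = 0 := by linear_combination (1 : ℝ) * Heq_0_3_4
    have Z_4_7 : D 4 7 = 0 := by linear_combination (1 : ℝ) * Heq_1_4_4 + (1 : ℝ) * Heq_0_4_5
    have Z_4_8 : D 4 8 = 0 := by linear_combination (-1 : ℝ) * Heq_1_8_7
    have Z_4_9 : D 4 9 = 0 := by linear_combination (1 : ℝ) * Heq_0_6_4
    have Z_4_10 : D 4 10 = 0 := by linear_combination (1 : ℝ) * Heq_1_7_4 + (1 : ℝ) * Heq_0_7_5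
    have Z_4_11 : D 4 11 = 0 := by linear_combination (1 : ℝ) * Heq_0_5_4
    have Z_5_3 : D 5 3 = 0 := by linear_combination (1 : ℝ) * Heq_1_5_8 + (1 : ℝ) * Heq_0_1_5
    have Z_5_4 : D 5 4 = 0 := by linear_combination (-1 : ℝ) * Heq_0_4_11
    have Z_5_5 : D 5 5 = 0 := by linear_combination ((-6 : ℝ)/7) * Heq_0_6_9 + ((5 : ℝ)/7) * Heq_0_5_11 + ((6 : ℝ)/7) * Heq_1_3_9 + ((-6 : ℝ)/7) * Heq_0_3_6 + ((-3 : ℝ)/7) * Heq_1_7_10 + ((-3 : ℝ)/7) * Heq_1_4_7 + (-1 : ℝ) * Heq_0_2_5 + ((3 : ℝ)/7) * Heq_2_4_10 + ((-5 : ℝ)/7) * Heq_2_8_11 + ((-5 : ℝ)/7) * Heq_2_5_8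
    have Z_5_6 : D 5 6 = 0 := by linear_combination (1 : ℝ) * Heq_0_3_5 + (-1 : ℝ) * Heq_0_1_2
    have Z_5_7 : D 5 7 = 0 := by linear_combination (-1 : ℝ) * Heq_0_7_11
    have Z_5_8 : D 5 8 = 0 := by linear_combination (-1 : ℝ) * Heq_0_8_11 + (1 : ℝ) * Heq_0_4_10
    have Z_5_9 : D 5 9 = 0 := by linear_combination (1 : ℝ) * Heq_0_6_5 + (-1 : ℝ) * Heq_0_3_2
    have Z_5_10 : D 5 10 = 0 := by linear_combination (-1 : ℝ) * Heq_0_10_11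
    have Z_5_11 : D 5 11 = 0 := by linear_combination (1 : ℝ) * Heq_0_5_5 + (1 : ℝ) * Heq_0_2_2
    have Z_6_6 : D 6 6 = 0 := by linear_combination ((9 : ℝ)/7) * Heq_1_3_9 + (1 : ℝ) * Heq_0_1_3 + ((-2 : ℝ)/7) * Heq_0_3_6 + ((-9 : ℝ)/7) * Heq_0_6_9 + ((-8 : ℝ)/7) * Heq_1_7_10 + ((-8 : ℝ)/7) * Heq_1_4_7 + ((4 : ℝ)/7) * Heq_0_5_11 + ((8 : ℝ)/7) * Heq_2_4_10 + ((-4 : ℝ)/7) * Heq_2_8_11 + ((-4 : ℝ)/7) * Heq_2_5_8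
    have Z_6_7 : D 6 7 = 0 := by linear_combination (-1 : ℝ) * Heq_0_7_9
    have Z_6_8 : D 6 8 = 0 := by linear_combination (-1 : ℝ) * Heq_0_8_9
    have Z_6_9 : D 6 9 = 0 := by linear_combination (1 : ℝ) * Heq_0_6_6 + (1 : ℝ) * Heq_0_3_3 + (1 : ℝ) * Heq_0_1_1
    have Z_6_10 : D 6 10 = 0 := by linear_combination (-1 : ℝ) * Heq_0_10_9
    have Z_6_11 : D 6 11 = 0 := by linear_combination (-1 : ℝ) * Heq_0_11_9
    have Z_7_6 : D 7 6 = 0 := by linear_combination (1 : ℝ) * Heq_0_3_7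
    have Z_7_7 : D 7 7 = 0 := by linear_combination ((-2 : ℝ)/7) * Heq_1_4_7 + ((-4 : ℝ)/7) * Heq_0_3_6 + ((8 : ℝ)/7) * Heq_0_5_11 + (1 : ℝ) * Heq_1_2_4 + ((-4 : ℝ)/7) * Heq_0_6_9 + ((4 : ℝ)/7) * Heq_1_3_9 + ((-9 : ℝ)/7) * Heq_1_7_10 + ((9 : ℝ)/7) * Heq_2_4_10 + ((-8 : ℝ)/7) * Heq_2_8_11 + ((-8 : ℝ)/7) * Heq_2_5_8
    have Z_7_8 : D 7 8 = 0 := by linear_combination (-1 : ℝ) * Heq_1_8_10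
    have Z_7_9 : D 7 9 = 0 := by linear_combination (1 : ℝ) * Heq_0_6_7
    have Z_7_10 : D 7 10 = 0 := by linear_combination (1 : ℝ) * Heq_1_7_7 + (1 : ℝ) * Heq_1_4_4 + (1 : ℝ) * Heq_0_4_5
    have Z_7_11 : D 7 11 = 0 := by linear_combination (1 : ℝ) * Heq_0_5_7
    have Z_8_6 : D 8 6 = 0 := by linear_combination (1 : ℝ) * Heq_0_3_8
    have Z_8_7 : D 8 7 = 0 := by linear_combination (1 : ℝ) * Heq_1_4_8
    have Z_8_8 : D 8 8 = 0 := by linear_combination ((-2 : ℝ)/7) * Heq_2_5_8 + (-1 : ℝ) * Heq_0_2_5 + ((9 : ℝ)/7) * Heq_0_5_11 + ((-8 : ℝ)/7) * Heq_0_6_9 + ((8 : ℝ)/7) * Heq_1_3_9 + ((-8 : ℝ)/7) * Heq_0_3_6 + ((-4 : ℝ)/7) * Heq_1_7_10 + ((-4 : ℝ)/7) * Heq_1_4_7 + ((4 : ℝ)/7) * Heq_2_4_10 + ((-9 : ℝ)/7) * Heq_2_8_11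
    have Z_8_9 : D 8 9 = 0 := by linear_combination (1 : ℝ) * Heq_0_6_8
    have Z_8_10 : D 8 10 = 0 := by linear_combination (1 : ℝ) * Heq_1_7_8
    have Z_8_11 : D 8 11 = 0 := by linear_combination (1 : ℝ) * Heq_0_5_8 + (-1 : ℝ) * Heq_0_4_10
    have Z_9_9 : D 9 9 = 0 := by linear_combination ((-10 : ℝ)/7) * Heq_1_7_10 + (1 : ℝ) * Heq_0_1_3 + ((-6 : ℝ)/7) * Heq_0_3_6 + ((-6 : ℝ)/7) * Heq_0_6_9 + ((13 : ℝ)/7) * Heq_1_3_9 + ((-10 : ℝ)/7) * Heq_1_4_7 + ((5 : ℝ)/7) * Heq_0_5_11 + ((10 : ℝ)/7) * Heq_2_4_10 + ((-5 : ℝ)/7) * Heq_2_8_11 + ((-5 : ℝ)/7) * Heq_2_5_8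
    have Z_9_10 : D 9 10 = 0 := by linear_combination (1 : ℝ) * Heq_1_7_9 + (-1 : ℝ) * Heq_0_7_6
    have Z_9_11 : D 9 11 = 0 := by linear_combination (1 : ℝ) * Heq_2_8_9
    have Z_10_9 : D 10 9 = 0 := by linear_combination (1 : ℝ) * Heq_0_6_10
    have Z_10_10 : D 10 10 = 0 := by linear_combination ((13 : ℝ)/7) * Heq_2_4_10 + ((10 : ℝ)/7) * Heq_0_5_11 + (1 : ℝ) * Heq_1_2_4 + ((-5 : ℝ)/7) * Heq_0_3_6 + ((-5 : ℝ)/7) * Heq_0_6_9 + ((5 : ℝ)/7) * Heq_1_3_9 + ((-6 : ℝ)/7) * Heq_1_7_10 + ((-6 : ℝ)/7) * Heq_1_4_7 + ((-10 : ℝ)/7) * Heq_2_8_11 + ((-10 : ℝ)/7) * Heq_2_5_8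
    have Z_10_11 : D 10 11 = 0 := by linear_combination (1 : ℝ) * Heq_0_5_10
    have Z_11_9 : D 11 9 = 0 := by linear_combination (1 : ℝ) * Heq_0_6_11 + (1 : ℝ) * Heq_0_3_5 + (-1 : ℝ) * Heq_0_1_2
    have Z_11_10 : D 11 10 = 0 := by linear_combination (1 : ℝ) * Heq_1_7_11
    have Z_11_11 : D 11 11 = 0 := by linear_combination ((-6 : ℝ)/7) * Heq_2_8_11 + (-1 : ℝ) * Heq_0_2_5 + ((13 : ℝ)/7) * Heq_0_5_11 + ((-10 : ℝ)/7) * Heq_0_6_9 + ((10 : ℝ)/7) * Heq_1_3_9 + ((-10 : ℝ)/7) * Heq_0_3_6 + ((-6 : ℝ)/7) * Heq_2_5_8 + ((-5 : ℝ)/7) * Heq_1_7_10 + ((-5 : ℝ)/7) * Heq_1_4_7 + ((5 : ℝ)/7) * Heq_2_4_10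
    have hz : ∀ a b : Fin 12, (a : ℕ) / 3 ≤ (b : ℕ) / 3 → D a b = 0 := by
      intro a b hab
      fin_cases a <;> fin_cases b <;> first | assumption | (exfalso; revert hab; decide)
    refine ⟨fun x => ?_, ⟨4, pow4_eq_zero D hz⟩⟩
    have hx0 : D.mulVec x 0 = 0 := by
      have e : D.mulVec x 0 = ∑ j, D 0 j * x j := rfl
      rw [e, sum12, Z_0_0, Z_0_1, Z_0_2, Z_0_3, Z_0_4, Z_0_5, Z_0_6, Z_0_7, Z_0_8, Z_0_9, Z_0_10, Z_0_11]
      ring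
    have hx1 : D.mulVec x 1 = 0 := by
      have e : D.mulVec x 1 = ∑ j, D 1 j * x j := rfl
      rw [e, sum12, Z_1_0, Z_1_1, Z_1_2, Z_1_3, Z_1_4, Z_1_5, Z_1_6, Z_1_7, Z_1_8, Z_1_9, Z_1_10, Z_1_11]
      ring
    have hx2 : D.mulVec x 2 = 0 := by
      have e : D.mulVec x 2 = ∑ j, D 2 j * x j := rfl
      rw [e, sum12, Z_2_0, Z_2_1, Z_2_2, Z_2_3, Z_2_4, Z_2_5, Z_2_6, Z_2_7, Z_2_8, Z_2_9, Z_2_10, Z_2_11]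
      ring
    rw [← Finset.univ_sum_single (D.mulVec x)]
    apply Submodule.sum_mem
    intro k _
    fin_cases k
    · show Pi.single (0 : Fin 12) (D.mulVec x 0) ∈ Submodule.span ℝ {z : Fin 12 → ℝ | ∃ a b : Fin 12 → ℝ, z = br c19 a b}
      rw [hx0, Pi.single_zero]; exact Submodule.zero_mem _
    · show Pi.single (1 : Fin 12) (D.mulVec x 1) ∈ Submodule.span ℝ {z : Fin 12 → ℝ | ∃ a b : Fin 12 → ℝ, z = br c19 a b}
      rw [hx1, Pi.single_zero]; exact Submodule.zero_mem _
    · show Pi.single (2 : Fin 12) (D.mulVec x 2) ∈ Submodule.span ℝ {z : Fin 12 → ℝ | ∃ a b : Fin 12 → ℝ, z = br c19 a b}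
      rw [hx2, Pi.single_zero]; exact Submodule.zero_mem _
    · exact single_scaled_mem _ _ (Submodule.subset_span ⟨_, _, gen3⟩)
    · exact single_scaled_mem _ _ (Submodule.subset_span ⟨_, _, gen4⟩)
    · exact single_scaled_mem _ _ (Submodule.subset_span ⟨_, _, gen5⟩)
    · exact single_scaled_mem _ _ (Submodule.subset_span ⟨_, _, gen6⟩)
    · exact single_scaled_mem _ _ (Submodule.subset_span ⟨_, _, gen7⟩)
    · exact single_scaled_mem _ _ (Submodule.subset_span ⟨_, _, gen8⟩)
    · exact single_scaled_mem _ _ (Submodule.subset_span ⟨_, _, gen9⟩)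
    · exact single_scaled_mem _ _ (Submodule.subset_span ⟨_, _, gen10⟩)
    · exact single_scaled_mem _ _ (Submodule.subset_span ⟨_, _, gen11⟩)

end RNPaper
end
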